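/- Assume the CZ-decomposition setting in dimension n. There exist A₀ ≥ 1 and C > 0 depending only on n such that for every A ≥ A₀, the number of distinct clusters S ⊆ E is at most C·N. -/

import Mathlib

noncomputable section

/-- The constant `c_G = 10⁻⁶`. -/
def cG : ℝ := 1 / 1000000

/-- A cube `Q = {a} + (−δ, δ]ⁿ` with center `c = a` and half-sidelength `d = δ`
(so the sidelength of `Q` is `2d`). -/
structure Cube (n : ℕ) where
  c : Fin n → ℝ
  d : ℝ

namespace Cube

/-- The cube as a subset of `ℝⁿ`. -/
def toSet {n : ℕ} (Q : Cube n) : Set (Fin n → ℝ) :=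
  {x | ∀ i, Q.c i - Q.d < x i ∧ x i ≤ Q.c i + Q.d}

/-- The sidelength `δ_Q` of a cube. -/
def side {n : ℕ} (Q : Cube n) : ℝ := 2 * Q.d

/-- The dilate `tQ`: same center, sidelength `t·δ_Q`. -/
def scale {n : ℕ} (t : ℝ) (Q : Cube n) : Cube n := ⟨Q.c, t * Q.d⟩

/-- `Q` is a dyadic cube `∏ᵢ (jᵢ·2^k, (jᵢ+1)·2^k]`. -/
def Dyadic {n : ℕ} (Q : Cube n) : Prop :=
  ∃ k : ℤ, ∃ j : Fin n → ℤ, Q.d = (2 : ℝ) ^ k / 2 ∧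
    ∀ i, Q.c i = ((j i : ℝ) + 1 / 2) * (2 : ℝ) ^ k

end Cube

/-- The CZ-decomposition setting: a partition `CZ` of `ℝⁿ` into dyadic cubes with
good geometry, and a finite set `E` with `#E ≥ 2` and `#(E ∩ 9Q) ≥ 2` for all `Q ∈ CZ`. -/
structure CZSetting (n : ℕ) where
  CZ : Set (Cube n)
  E : Finset (Fin n → ℝ)
  dyadic : ∀ Q ∈ CZ, Q.Dyadic
  partition : ∀ x : Fin n → ℝ, ∃! Q, Q ∈ CZ ∧ x ∈ Q.toSet
  goodGeom : ∀ Q ∈ CZ, ∀ Q' ∈ CZ,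
    ((Q.scale (1 + 10 * cG)).toSet ∩ (Q'.scale (1 + 10 * cG)).toSet).Nonempty →
      Q.side / 64 ≤ Q'.side ∧ Q'.side ≤ 64 * Q.side
  two_le_card : 2 ≤ E.card
  dense : ∀ Q ∈ CZ, 2 ≤ ((E : Set (Fin n → ℝ)) ∩ (Q.scale 9).toSet).ncard

/-- `S` is a cluster of `E` (with parameter `A`): `S ⊆ E`, `#S ≥ 2` and
`dist(S, E∖S) ≥ A³·diam S` (with the convention `dist(S,∅) = +∞`). -/
def IsCluster {n : ℕ} (A : ℝ) (E S : Finset (Fin n → ℝ)) : Prop :=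
  S ⊆ E ∧ 2 ≤ S.card ∧
  ∀ x ∈ S, ∀ y ∈ E \ S, A ^ 3 * Metric.diam (S : Set (Fin n → ℝ)) ≤ dist x y

/-- `Q` is interstellar: `diam(A¹⁰Q ∩ E) ≤ A⁻¹⁰·δ_Q` and `(1+3c_G)Q ∩ E = ∅`. -/
def Interstellar {n : ℕ} (A : ℝ) (E : Finset (Fin n → ℝ)) (Q : Cube n) : Prop :=
  Metric.diam ((Q.scale (A ^ 10)).toSet ∩ (E : Set (Fin n → ℝ))) ≤ (A ^ 10)⁻¹ * Q.side ∧
  (Q.scale (1 + 3 * cG)).toSet ∩ (E : Set (Fin n → ℝ)) = ∅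

/-- The halo `H(S)` of a cluster `S` with representative `xS`:
`{x : A·diam S < |x − xS| < A⁻¹·dist(S, E∖S)}` (with `dist(S,∅) = +∞`). -/
def Halo {n : ℕ} (A : ℝ) (E S : Finset (Fin n → ℝ)) (xS : Fin n → ℝ) :
    Set (Fin n → ℝ) :=
  {x | A * Metric.diam (S : Set (Fin n → ℝ)) < dist x xS ∧
    ∀ y ∈ S, ∀ z ∈ E \ S, A * dist x xS < dist y z}

/-- `Q` is a keystone cube of `CZ`: every `Q' ∈ CZ` meeting `100Q` is at least as big. -/
def Keystone {n : ℕ} (CZ : Set (Cube n)) (Q : Cube n) : Prop :=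
  Q ∈ CZ ∧ ∀ Q' ∈ CZ, (Q'.toSet ∩ (Q.scale 100).toSet).Nonempty → Q.side ≤ Q'.side

/-- A laminar family of subsets of `E`, each of cardinality at least 2, has at most
`E.card` members. -/
lemma laminar_card_le {α : Type*} [DecidableEq α] :
    ∀ (N : ℕ) (F : Finset (Finset α)) (E : Finset α), F.card ≤ N →
      (∀ S ∈ F, S ⊆ E) → (∀ S ∈ F, 2 ≤ S.card) →
      (∀ S ∈ F, ∀ T ∈ F, (S ∩ T).Nonempty → S ⊆ T ∨ T ⊆ S) →
      F.card ≤ E.card := by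
  intro N
  induction N with
  | zero =>
    intro F E hN _ _ _
    omega
  | succ N ih =>
    intro F E hN hsub h2 hlam
    rcases F.eq_empty_or_nonempty with rfl | hne
    · simp
    obtain ⟨S, hS, hmin⟩ := F.exists_minimal hne
    obtain ⟨a, ha, b, hb, hab⟩ := Finset.one_lt_card.mp (h2 S hS)
    -- key: any other member containing b contains S
    have key : ∀ T ∈ F, T ≠ S → b ∈ T → S ⊆ T := by
      intro T hT hTS hbT
      rcases hlam S hS T hT ⟨b, Finset.mem_inter.mpr ⟨hb, hbT⟩⟩ with h | h
      · exact h
      · exact absurd (lt_of_le_of_ne h hTS) (fun hlt => not_subset_of_ssubset hlt (hmin hT (subset_of_ssubset hlt)))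
    have asym : ∀ T T' : Finset α, T ∈ F → T ≠ S → T' ∈ F → T' ≠ S →
        T.erase b = T'.erase b → b ∈ T → b ∉ T' → False := by
      intro T T' hTF hTS hT'F hT'S hEq hbT hbT'
      have hST : S ⊆ T := key T hTF hTS hbT
      have haT' : a ∈ T' := by
        have h1 : a ∈ T.erase b := Finset.mem_erase.mpr ⟨hab, hST ha⟩
        rw [hEq] at h1
        exact Finset.mem_of_mem_erase h1
      rcases hlam S hS T' hT'F ⟨a, Finset.mem_inter.mpr ⟨ha, haT'⟩⟩ with h | h
      · exact hbT' (h hb)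
      · exact hT'S (le_antisymm h (by
          by_contra hc
          exact not_subset_of_ssubset (lt_of_le_of_ne h hT'S) (hmin hT'F h)) ▸ rfl) |>.elim
    have hinj : Set.InjOn (fun T : Finset α => T.erase b) ↑(F.erase S) := by
      intro T hT T' hT' hEq
      have hEq' : T.erase b = T'.erase b := hEq
      simp only [Finset.coe_erase, Set.mem_diff, Finset.mem_coe, Set.mem_singleton_iff] at hT hT'
      by_cases hbT : b ∈ T <;> by_cases hbT' : b ∈ T'
      · have h1 : insert b (T.erase b) = insert b (T'.erase b) := by rw [hEq']
        rwa [Finset.insert_erase hbT, Finset.insert_erase hbT'] at h1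
      · exact absurd (asym T T' hT.1 hT.2 hT'.1 hT'.2 hEq' hbT hbT') not_false
      · exact absurd (asym T' T hT'.1 hT'.2 hT.1 hT.2 hEq'.symm hbT' hbT) not_false
      · rwa [Finset.erase_eq_of_notMem hbT, Finset.erase_eq_of_notMem hbT'] at hEq'
    set F' : Finset (Finset α) := (F.erase S).image (fun T => T.erase b) with hF'
    have hcardF' : F'.card = F.card - 1 := by
      rw [hF', Finset.card_image_of_injOn hinj, Finset.card_erase_of_mem hS]
    have hF'le : F'.card ≤ (E.erase b).card := by
      apply ih F' (E.erase b)
      · omega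
      · intro T hT
        obtain ⟨T₀, hT₀, rfl⟩ := Finset.mem_image.mp hT
        exact Finset.erase_subset_erase b (hsub T₀ (Finset.mem_of_mem_erase hT₀))
      · intro T hT
        obtain ⟨T₀, hT₀, rfl⟩ := Finset.mem_image.mp hT
        have hT₀F := Finset.mem_of_mem_erase hT₀
        by_cases hbT : b ∈ T₀
        · have hST : S ⊆ T₀ := key T₀ hT₀F (Finset.ne_of_mem_erase hT₀) hbT
          have : S ⊂ T₀ := lt_of_le_of_ne hST (Ne.symm (Finset.ne_of_mem_erase hT₀))
          have h3 : 3 ≤ T₀.card := by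
            have := Finset.card_lt_card this
            have := h2 S hS
            omega
          rw [Finset.card_erase_of_mem hbT]
          omega
        · rw [Finset.erase_eq_of_notMem hbT]
          exact h2 T₀ hT₀F
      · intro T hT T' hT' hint
        obtain ⟨T₀, hT₀, rfl⟩ := Finset.mem_image.mp hT
        obtain ⟨T₀', hT₀', rfl⟩ := Finset.mem_image.mp hT'
        obtain ⟨x, hx⟩ := hint
        rw [Finset.mem_inter, Finset.mem_erase, Finset.mem_erase] at hx
        rcases hlam T₀ (Finset.mem_of_mem_erase hT₀) T₀' (Finset.mem_of_mem_erase hT₀')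
          ⟨x, Finset.mem_inter.mpr ⟨hx.1.2, hx.2.2⟩⟩ with h | h
        · exact Or.inl (Finset.erase_subset_erase b h)
        · exact Or.inr (Finset.erase_subset_erase b h)
    have hbE : b ∈ E := hsub S hS hb
    have : (E.erase b).card = E.card - 1 := Finset.card_erase_of_mem hbE
    have hEpos : 1 ≤ E.card := Finset.card_pos.mpr ⟨b, hbE⟩
    omega

/-- Two intersecting clusters are nested (for `A ≥ 2`). -/
lemma cluster_laminar {n : ℕ} {A : ℝ} (hA : 2 ≤ A) {E S T : Finset (Fin n → ℝ)}
    (hS : IsCluster A E S) (hT : IsCluster A E T) (h : (S ∩ T).Nonempty) :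
    S ⊆ T ∨ T ⊆ S := by
  classical
  by_contra hc
  push_neg at hc
  obtain ⟨hST, hTS⟩ := hc
  obtain ⟨x, hx⟩ := h
  rw [Finset.mem_inter] at hx
  obtain ⟨y, hyS, hyT⟩ := Finset.not_subset.mp hST
  obtain ⟨z, hzT, hzS⟩ := Finset.not_subset.mp hTS
  have hbS : Bornology.IsBounded (S : Set (Fin n → ℝ)) := S.finite_toSet.isBounded
  have hbT : Bornology.IsBounded (T : Set (Fin n → ℝ)) := T.finite_toSet.isBounded
  -- x ∈ T, y ∈ E \ T  :  A³ diam T ≤ dist x y ≤ diam S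
  have h1 : A ^ 3 * Metric.diam (T : Set (Fin n → ℝ)) ≤ dist x y := by
    refine hT.2.2 x hx.2 y ?_
    exact Finset.mem_sdiff.mpr ⟨hS.1 hyS, hyT⟩
  have h1' : dist x y ≤ Metric.diam (S : Set (Fin n → ℝ)) :=
    Metric.dist_le_diam_of_mem hbS hx.1 hyS
  -- x ∈ S, z ∈ E \ S  :  A³ diam S ≤ dist x z ≤ diam T
  have h2 : A ^ 3 * Metric.diam (S : Set (Fin n → ℝ)) ≤ dist x z := by
    refine hS.2.2 x hx.1 z ?_
    exact Finset.mem_sdiff.mpr ⟨hT.1 hzT, hzS⟩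
  have h2' : dist x z ≤ Metric.diam (T : Set (Fin n → ℝ)) :=
    Metric.dist_le_diam_of_mem hbT hx.2 hzT
  -- diam S > 0
  obtain ⟨u, hu, v, hv, huv⟩ := Finset.one_lt_card.mp hS.2.1
  have hduv : 0 < dist u v := dist_pos.mpr huv
  have hdS : 0 < Metric.diam (S : Set (Fin n → ℝ)) :=
    lt_of_lt_of_le hduv (Metric.dist_le_diam_of_mem hbS hu hv)
  have hA3 : (0:ℝ) ≤ A ^ 3 := by positivity
  have e1 : A ^ 3 * Metric.diam (S : Set (Fin n → ℝ)) ≤ Metric.diam (T : Set (Fin n → ℝ)) :=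
    h2.trans h2'
  have e2 : A ^ 3 * Metric.diam (T : Set (Fin n → ℝ)) ≤ Metric.diam (S : Set (Fin n → ℝ)) :=
    h1.trans h1'
  have e4 : A ^ 3 * (A ^ 3 * Metric.diam (S : Set (Fin n → ℝ))) ≤
      Metric.diam (S : Set (Fin n → ℝ)) :=
    (mul_le_mul_of_nonneg_left e1 hA3).trans e2
  have hA8 : (8:ℝ) ≤ A ^ 3 := by
    have := pow_le_pow_left₀ (by norm_num : (0:ℝ) ≤ 2) hA 3
    norm_num at this
    linarith
  have h64 : (64:ℝ) ≤ A ^ 3 * A ^ 3 := by nlinarith [hA8]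
  nlinarith [e4, hdS, h64]


/-- **Lemma 5.4 (Lemma B): the number of distinct clusters is at most `C·N`.** -/
theorem statement10 (n : ℕ) (hn : 1 ≤ n) :
    ∃ A₀ C : ℝ, 1 ≤ A₀ ∧ 0 < C ∧
      ∀ A : ℝ, A₀ ≤ A →
        ∀ S : CZSetting n,
          ({T : Finset (Fin n → ℝ) | IsCluster A S.E T}.ncard : ℝ) ≤ C * S.E.card := by
  classical
  refine ⟨2, 1, one_le_two, one_pos, ?_⟩
  intro A hA S
  set F : Finset (Finset (Fin n → ℝ)) :=
    S.E.powerset.filter (fun T => IsCluster A S.E T) with hF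
  have hset : {T : Finset (Fin n → ℝ) | IsCluster A S.E T} = ↑F := by
    ext T
    simp only [Set.mem_setOf_eq, hF, Finset.coe_filter, Finset.mem_powerset]
    exact ⟨fun h => ⟨h.1, h⟩, fun h => h.2⟩
  rw [hset, Set.ncard_coe_finset, one_mul, Nat.cast_le]
  apply laminar_card_le F.card F S.E le_rfl
  · intro T hT
    exact Finset.mem_powerset.mp (Finset.mem_filter.mp hT).1
  · intro T hT
    exact ((Finset.mem_filter.mp hT).2).2.1
  · intro T hT T' hT' hint
    exact cluster_laminar hA (Finset.mem_filter.mp hT).2 (Finset.mem_filter.mp hT').2 hint
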